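/- arXiv:1409.0463 — 2 statements merged into one kernel-verified Lean document; each statement's English description precedes it below -/
import Mathlib

section
/- Let $(X, \mathcal{F}, \mu, T)$ be a measure-preserving system with $T$ invertible, and let $a$ and $b$ be distinct integers. Let $f_1, f_2 \in L^\infty(\mu)$. Suppose there exist sequences $(f_1^i)_i$ and $(f_2^i)_i$ in $L^\infty(\mu)$ and a constant $M > 0$ such that: $\|f_1^i\|_{L^\infty(\mu)} < M$ for every $i$; $f_j^i \to f_j$ in $L^2(\mu)$ as $i \to \infty$ for each $j = 1, 2$; and for each $i$ there is a set $X_i \subseteq X$ of full $\mu$-measure such that for every $x \in X_i$, every positive integer $k$, and every polynomial $p$ of degree at most $k$ with real coefficients, the averages $\frac{1}{N} \sum_{n=1}^{N} f_1^i(T^{an}x) f_2^i(T^{bn}x) e^{2\pi i p(n)}$ converge as $N \to \infty$. Then there exists a set $X_\infty \subseteq X$ of full $\mu$-measure such that for every $x \in X_\infty$ and every polynomial $p$ with real coefficients, the averages $\frac{1}{N} \sum_{n=1}^{N} f_1(T^{an}x) f_2(T^{bn}x) e^{2\pi i p(n)}$ converge as $N \to \infty$. -/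
open MeasureTheory Filter Finset

/-- The `m`-th power (for `m : ℤ`) of an invertible transformation, applied to a point. -/
def iterZ {X : Type*} (T : X ≃ X) (m : ℤ) : X → X := fun x => (T ^ m) x

/-- `e(α) = exp(2πiα)`. -/
noncomputable def e (α : ℝ) : ℂ := Complex.exp (2 * Real.pi * Complex.I * α)

/-- The polynomial Wiener–Wintner double recurrence average
`(1/N) ∑_{n=1}^N g₁(T^{an} x) g₂(T^{bn} x) e(p(n))`. -/
noncomputable def wAvg {X : Type*} (T : X ≃ X) (a b : ℤ) (g₁ g₂ : X → ℝ) (x : X)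
    (p : Polynomial ℝ) (N : ℕ) : ℂ :=
  (N : ℂ)⁻¹ * ∑ n ∈ Finset.Icc 1 N,
    (g₁ (iterZ T (a * n) x) : ℂ) * (g₂ (iterZ T (b * n) x) : ℂ) * e (p.eval (n : ℝ))

section iterZlemmas

variable {X : Type*} [MeasurableSpace X] {μ : Measure X}

lemma iterZ_add_one (T : X ≃ X) (m : ℤ) (x : X) :
    iterZ T (m + 1) x = iterZ T m (T x) := by
  simp [iterZ, zpow_add_one, Equiv.Perm.mul_apply]

lemma iterZ_sub_one (T : X ≃ X) (m : ℤ) (x : X) :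
    iterZ T (m - 1) x = iterZ T m (T.symm x) := by
  simp only [iterZ, zpow_sub_one, Equiv.Perm.mul_apply]
  rfl

lemma iterZ_measurable (T : X ≃ᵐ X) (m : ℤ) : Measurable (iterZ T.toEquiv m) := by
  induction m using Int.induction_on with
  | zero => exact (show iterZ T.toEquiv 0 = id by funext x; simp [iterZ]) ▸ measurable_id
  | succ n ih =>
      have h : iterZ T.toEquiv (n + 1) = (iterZ T.toEquiv n) ∘ T := by
        funext x; exact iterZ_add_one _ _ x
      rw [h]; exact ih.comp T.measurable
  | pred n ih =>
      have h : iterZ T.toEquiv (-(n : ℤ) - 1) = (iterZ T.toEquiv (-n)) ∘ T.symm := by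
        funext x; exact iterZ_sub_one _ _ x
      rw [h]; exact ih.comp T.symm.measurable

lemma iterZ_measurePreserving (T : X ≃ᵐ X) (hT : MeasurePreserving T μ μ) (m : ℤ) :
    MeasurePreserving (iterZ T.toEquiv m) μ μ := by
  induction m using Int.induction_on with
  | zero =>
      have : iterZ T.toEquiv 0 = id := by funext x; simp [iterZ]
      rw [this]; exact MeasurePreserving.id μ
  | succ n ih =>
      have h : iterZ T.toEquiv (n + 1) = (iterZ T.toEquiv n) ∘ T := by
        funext x; exact iterZ_add_one _ _ x
      rw [h]; exact ih.comp hT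
  | pred n ih =>
      have h : iterZ T.toEquiv (-(n : ℤ) - 1) = (iterZ T.toEquiv (-n)) ∘ T.symm := by
        funext x; exact iterZ_sub_one _ _ x
      rw [h]; exact ih.comp (MeasurePreserving.symm T hT)

/-- `T^m` as a measurable equivalence. -/
def iterME (T : X ≃ᵐ X) (m : ℤ) : X ≃ᵐ X where
  toEquiv := T.toEquiv ^ m
  measurable_toFun := iterZ_measurable T m
  measurable_invFun := by
    have h : ⇑(T.toEquiv ^ m).symm = iterZ T.toEquiv (-m) := by
      funext x
      have : (T.toEquiv ^ m).symm = (T.toEquiv ^ m)⁻¹ := rfl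
      rw [this, ← zpow_neg]
      rfl
    rw [h]; exact iterZ_measurable T (-m)

lemma iterME_coe (T : X ≃ᵐ X) (m : ℤ) : ⇑(iterME T m) = iterZ T.toEquiv m := rfl

lemma iterZ_embedding (T : X ≃ᵐ X) (m : ℤ) :
    MeasurableEmbedding (iterZ T.toEquiv m) := by
  rw [← iterME_coe]; exact (iterME T m).measurableEmbedding

lemma iterZ_ae (T : X ≃ᵐ X) (hT : MeasurePreserving T μ μ) (m : ℤ) {P : X → Prop}
    (h : ∀ᵐ x ∂μ, P x) : ∀ᵐ x ∂μ, P (iterZ T.toEquiv m x) :=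
  (iterZ_measurePreserving T hT m).quasiMeasurePreserving.ae h

lemma iterZ_mul_nat (T : X ≃ X) (c : ℤ) (n : ℕ) (x : X) :
    iterZ T (c * n) x = (iterZ T c)^[n] x := by
  induction n generalizing x with
  | zero => simp [iterZ]
  | succ n ih =>
      have : (c : ℤ) * (n + 1 : ℕ) = c * n + c := by push_cast; ring
      rw [this]
      have h2 : iterZ T (c * n + c) x = iterZ T (c * n) (iterZ T c x) := by
        simp [iterZ, zpow_add, Equiv.Perm.mul_apply]
      rw [h2, ih, Function.iterate_succ_apply]

end iterZlemmas

section maximal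

variable {X : Type*} [MeasurableSpace X] {μ : Measure X}

/-- running maximum of Birkhoff sums `birkhoffSum S g k x`, `1 ≤ k ≤ n`, together with `0`. -/
noncomputable def mSup (S : X → X) (g : X → ℝ) : ℕ → X → ℝ
  | 0 => fun _ => 0
  | n + 1 => fun x => max (mSup S g n x) (birkhoffSum S g (n + 1) x)

/-- The `n`-th (shifted) ergodic average `(1/N) ∑_{n=1}^N g(S^n x)`. -/
noncomputable def avgR (S : X → X) (g : X → ℝ) (N : ℕ) (x : X) : ℝ :=
  (N : ℝ)⁻¹ * ∑ n ∈ Finset.Icc 1 N, g (S^[n] x)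

lemma mSup_nonneg (S : X → X) (g : X → ℝ) (n : ℕ) (x : X) : 0 ≤ mSup S g n x := by
  induction n with
  | zero => simp [mSup]
  | succ n ih => exact le_trans ih (le_max_left _ _)

lemma mSup_le_succ (S : X → X) (g : X → ℝ) (n : ℕ) (x : X) :
    mSup S g n x ≤ mSup S g (n + 1) x := le_max_left _ _

lemma mSup_succ_eq (S : X → X) (g : X → ℝ) (n : ℕ) (x : X) :
    mSup S g (n + 1) x = max 0 (g x + mSup S g n (S x)) := by
  induction n generalizing x with
  | zero => simp [mSup, birkhoffSum_one']
  | succ n ih =>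
      show max (mSup S g (n + 1) x) (birkhoffSum S g (n + 2) x) = _
      rw [ih x, birkhoffSum_succ' S g (n + 1) x, max_assoc, max_add_add_left]
      rfl

lemma mSup_pos_iff (S : X → X) (g : X → ℝ) (n : ℕ) (x : X) :
    0 < mSup S g n x ↔ ∃ k, 1 ≤ k ∧ k ≤ n ∧ 0 < birkhoffSum S g k x := by
  induction n with
  | zero =>
      simp only [mSup]
      constructor
      · intro h; exact absurd h (lt_irrefl 0)
      · rintro ⟨k, h1, h2, -⟩; omega
  | succ n ih =>
      show 0 < max (mSup S g n x) (birkhoffSum S g (n + 1) x) ↔ _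
      rw [lt_max_iff, ih]
      constructor
      · rintro (⟨k, h1, h2, h3⟩ | h)
        · exact ⟨k, h1, h2.trans (Nat.le_succ n), h3⟩
        · exact ⟨n + 1, Nat.succ_le_succ (Nat.zero_le n), le_rfl, h⟩
      · rintro ⟨k, h1, h2, h3⟩
        rcases Nat.lt_or_ge k (n + 1) with h | h
        · exact Or.inl ⟨k, h1, Nat.lt_succ_iff.mp h, h3⟩
        · have : k = n + 1 := le_antisymm h2 h
          exact Or.inr (this ▸ h3)

lemma abs_birkhoffSum_le (S : X → X) (g : X → ℝ) {B : ℝ} (hB : ∀ x, |g x| ≤ B)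
    (k : ℕ) (x : X) : |birkhoffSum S g k x| ≤ k * B := by
  unfold birkhoffSum
  calc |∑ i ∈ Finset.range k, g (S^[i] x)| ≤ ∑ i ∈ Finset.range k, |g (S^[i] x)| :=
        Finset.abs_sum_le_sum_abs _ _
    _ ≤ ∑ _i ∈ Finset.range k, B := Finset.sum_le_sum fun i _ => hB _
    _ = k * B := by simp [mul_comm]

lemma mSup_le_bound (S : X → X) (g : X → ℝ) {B : ℝ} (hB : ∀ x, |g x| ≤ B)
    (n : ℕ) (x : X) : mSup S g n x ≤ n * B := by
  induction n with
  | zero => simp [mSup]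
  | succ n ih =>
      have hB0 : 0 ≤ B := le_trans (abs_nonneg _) (hB x)
      refine max_le (ih.trans ?_) ((abs_le.mp (abs_birkhoffSum_le S g hB (n + 1) x)).2)
      have : (n : ℝ) ≤ (n : ℝ) + 1 := by linarith
      calc (n : ℝ) * B ≤ ((n : ℝ) + 1) * B := by nlinarith
        _ = ((n + 1 : ℕ) : ℝ) * B := by push_cast; ring

lemma measurable_birkhoffSum {S : X → X} (hS : Measurable S) {g : X → ℝ}
    (hg : Measurable g) (n : ℕ) : Measurable (birkhoffSum S g n) := by
  unfold birkhoffSum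
  exact Finset.measurable_sum _ fun i _ => hg.comp (hS.iterate i)

lemma measurable_mSup {S : X → X} (hS : Measurable S) {g : X → ℝ}
    (hg : Measurable g) (n : ℕ) : Measurable (mSup S g n) := by
  induction n with
  | zero => exact measurable_const
  | succ n ih => exact ih.max (measurable_birkhoffSum hS hg (n + 1))

lemma integrable_of_bounded [IsFiniteMeasure μ] {g : X → ℝ} (hg : Measurable g)
    {B : ℝ} (hB : ∀ x, |g x| ≤ B) : Integrable g μ :=
  Integrable.mono' (integrable_const B) hg.aestronglyMeasurable
    (Filter.Eventually.of_forall fun x => by simpa [Real.norm_eq_abs] using hB x)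

/-- Garsia's maximal ergodic lemma. -/
lemma garsia [IsProbabilityMeasure μ] {S : X → X} (hSm : Measurable S)
    (hSe : MeasurableEmbedding S) (hS : MeasurePreserving S μ μ)
    {g : X → ℝ} (hg : Measurable g) {B : ℝ} (hB : ∀ x, |g x| ≤ B) (n : ℕ) :
    0 ≤ ∫ x in {x | 0 < mSup S g n x}, g x ∂μ := by
  set E := {x | 0 < mSup S g n x} with hEdef
  have hE : MeasurableSet E := measurableSet_lt measurable_const (measurable_mSup hSm hg n)
  have hMbd : ∀ x, |mSup S g n x| ≤ n * B := fun x => by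
    rw [abs_of_nonneg (mSup_nonneg S g n x)]; exact mSup_le_bound S g hB n x
  have hMint : Integrable (mSup S g n) μ := integrable_of_bounded (measurable_mSup hSm hg n) hMbd
  have hMSint : Integrable (fun x => mSup S g n (S x)) μ :=
    integrable_of_bounded ((measurable_mSup hSm hg n).comp hSm) fun x => hMbd (S x)
  have hgint : Integrable g μ := integrable_of_bounded hg hB
  -- pointwise estimate on E
  have key : ∀ x ∈ E, mSup S g n x - mSup S g n (S x) ≤ g x := by
    intro x hx
    have h1 : mSup S g n x ≤ max 0 (g x + mSup S g n (S x)) :=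
      (mSup_le_succ S g n x).trans_eq (mSup_succ_eq S g n x)
    rcases le_max_iff.mp h1 with h | h
    · exact absurd hx (by simp only [hEdef, Set.mem_setOf_eq]; linarith)
    · linarith
  have step1 : ∫ x in E, (mSup S g n x - mSup S g n (S x)) ∂μ ≤ ∫ x in E, g x ∂μ := by
    refine setIntegral_mono_on (hMint.integrableOn.sub hMSint.integrableOn)
      hgint.integrableOn hE key
  have step2 : ∫ x in E, (mSup S g n x - mSup S g n (S x)) ∂μ
      = ∫ x in E, mSup S g n x ∂μ - ∫ x in E, mSup S g n (S x) ∂μ :=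
    integral_sub hMint.integrableOn hMSint.integrableOn
  have step3 : ∫ x in E, mSup S g n x ∂μ = ∫ x, mSup S g n x ∂μ := by
    have hcompl : ∫ x in Eᶜ, mSup S g n x ∂μ = 0 := by
      have : ∀ x ∈ Eᶜ, mSup S g n x = (0 : ℝ) := by
        intro x hx
        have h1 : ¬ (0 < mSup S g n x) := hx
        have h2 : 0 ≤ mSup S g n x := mSup_nonneg S g n x
        exact le_antisymm (not_lt.mp h1) h2
      calc ∫ x in Eᶜ, mSup S g n x ∂μ = ∫ _x in Eᶜ, (0:ℝ) ∂μ :=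
            setIntegral_congr_fun hE.compl this
        _ = 0 := by simp
    have := integral_add_compl hE hMint
    linarith
  have step4 : ∫ x in E, mSup S g n (S x) ∂μ ≤ ∫ x, mSup S g n (S x) ∂μ :=
    setIntegral_le_integral hMSint (Filter.Eventually.of_forall fun x => mSup_nonneg S g n (S x))
  have step5 : ∫ x, mSup S g n (S x) ∂μ = ∫ x, mSup S g n x ∂μ :=
    hS.integral_comp hSe _
  linarith

end maximal

section maximal2

open MeasureTheory Filter Finset

variable {X : Type*} [MeasurableSpace X] {μ : Measure X}

lemma sum_Icc_eq_birkhoff (S : X → X) (g : X → ℝ) (N : ℕ) (x : X) :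
    ∑ n ∈ Finset.Icc 1 N, g (S^[n] x) = birkhoffSum S g N (S x) := by
  induction N with
  | zero => simp [birkhoffSum]
  | succ N ih =>
      rw [Finset.sum_Icc_succ_top (Nat.one_le_iff_ne_zero.mpr (Nat.succ_ne_zero N)), ih,
        birkhoffSum_succ, Function.iterate_succ_apply]

lemma birkhoffSum_sub_const (S : X → X) (g : X → ℝ) (lam : ℝ) (N : ℕ) (x : X) :
    birkhoffSum S (fun y => g y - lam) N x = birkhoffSum S g N x - N * lam := by
  unfold birkhoffSum
  rw [Finset.sum_sub_distrib, Finset.sum_const, Finset.card_range, nsmul_eq_mul]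

lemma abs_avgR_le (S : X → X) (g : X → ℝ) {B : ℝ} (hB : ∀ x, |g x| ≤ B)
    (hB0 : 0 ≤ B) (N : ℕ) (x : X) : |avgR S g N x| ≤ B := by
  rcases Nat.eq_zero_or_pos N with h | h
  · simp [avgR, h, hB0]
  · have hN : (0:ℝ) < N := by exact_mod_cast h
    have hsum : |∑ n ∈ Finset.Icc 1 N, g (S^[n] x)| ≤ N * B := by
      calc |∑ n ∈ Finset.Icc 1 N, g (S^[n] x)| ≤ ∑ n ∈ Finset.Icc 1 N, |g (S^[n] x)| :=
            Finset.abs_sum_le_sum_abs _ _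
        _ ≤ ∑ _n ∈ Finset.Icc 1 N, B := Finset.sum_le_sum fun n _ => hB _
        _ = N * B := by simp [Nat.card_Icc]
    calc |avgR S g N x| = (N:ℝ)⁻¹ * |∑ n ∈ Finset.Icc 1 N, g (S^[n] x)| := by
          unfold avgR
          rw [abs_mul, abs_inv, Nat.abs_cast]
      _ ≤ (N:ℝ)⁻¹ * ((N:ℝ) * B) := mul_le_mul_of_nonneg_left hsum (by positivity)
      _ = B := by field_simp

lemma avgR_nonneg (S : X → X) {g : X → ℝ} (hg : ∀ x, 0 ≤ g x) (N : ℕ) (x : X) :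
    0 ≤ avgR S g N x := by
  unfold avgR
  exact mul_nonneg (by positivity) (Finset.sum_nonneg fun n _ => hg _)

/-- Maximal ergodic inequality, weak-type bound for the limsup of averages. -/
lemma maximal_ineq [IsProbabilityMeasure μ] {S : X → X} (hSm : Measurable S)
    (hSe : MeasurableEmbedding S) (hS : MeasurePreserving S μ μ)
    {g : X → ℝ} (hg : Measurable g) {B : ℝ} (hB : ∀ x, |g x| ≤ B)
    {lam : ℝ} (hlam : 0 < lam) :
    μ {x | lam < limsup (fun N => avgR S g N x) atTop}
      ≤ ENNReal.ofReal (lam⁻¹ * ∫ x, |g x| ∂μ) := by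
  have hB0 : 0 ≤ B := by
    rcases isEmpty_or_nonempty X with hX | hX
    · have : μ Set.univ = 1 := measure_univ
      rw [Set.univ_eq_empty_iff.mpr hX] at this
      simp at this
    · exact le_trans (abs_nonneg _) (hB hX.some)
  set h : X → ℝ := fun y => g y - lam with hhdef
  have hhm : Measurable h := hg.sub measurable_const
  have hhB : ∀ x, |h x| ≤ B + lam := fun x => by
    have := hB x
    rw [hhdef]
    simp only [abs_sub_le_iff] at this ⊢
    constructor <;> [skip; skip] <;> cases' abs_le.mp (hB x) with h1 h2 <;> linarith
  set En : ℕ → Set X := fun n => {y | 0 < mSup S h n y} with hEndef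
  have hEnm : ∀ n, MeasurableSet (En n) := fun n =>
    measurableSet_lt measurable_const (measurable_mSup hSm hhm n)
  have hEnmono : Monotone En := by
    refine monotone_nat_of_le_succ fun n y hy => ?_
    exact lt_of_lt_of_le hy (mSup_le_succ S h n y)
  set E : Set X := ⋃ n, En n with hEdef
  have hEm : MeasurableSet E := MeasurableSet.iUnion hEnm
  -- inclusion
  have hincl : {x | lam < limsup (fun N => avgR S g N x) atTop} ⊆ S ⁻¹' E := by
    intro x hx
    have hbdd : IsBoundedUnder (· ≥ ·) atTop (fun N => avgR S g N x) :=
      isBoundedUnder_of ⟨-B, fun N => (abs_le.mp (abs_avgR_le S g hB hB0 N x)).1⟩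
    have hex : ∃ N, lam < avgR S g N x := by
      by_contra hcon
      push_neg at hcon
      have : limsup (fun N => avgR S g N x) atTop ≤ lam :=
        limsup_le_of_le hbdd.isCoboundedUnder_le (Filter.Eventually.of_forall hcon)
      exact absurd hx (by simp only [Set.mem_setOf_eq]; linarith)
    obtain ⟨N, hN⟩ := hex
    have hNpos : 0 < N := by
      rcases Nat.eq_zero_or_pos N with h0 | h0
      · exfalso; rw [h0] at hN; simp [avgR] at hN; linarith
      · exact h0
    have hNR : (0:ℝ) < N := by exact_mod_cast hNpos
    have hsum : (N:ℝ) * lam < birkhoffSum S g N (S x) := by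
      rw [← sum_Icc_eq_birkhoff]
      have := hN
      unfold avgR at this
      rw [inv_mul_eq_div, lt_div_iff₀ hNR] at this
      linarith
    have hpos : 0 < birkhoffSum S h N (S x) := by
      rw [hhdef, birkhoffSum_sub_const]
      linarith
    refine Set.mem_preimage.mpr (Set.mem_iUnion.mpr ⟨N, ?_⟩)
    exact (mSup_pos_iff S h N (S x)).mpr ⟨N, hNpos, le_rfl, hpos⟩
  -- Garsia limit
  have hgarsia : ∀ n, 0 ≤ ∫ y in En n, h y ∂μ := fun n =>
    garsia hSm hSe hS hhm hhB n
  have hhint : Integrable h μ := integrable_of_bounded hhm hhB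
  have htendsto : Tendsto (fun n => ∫ y in En n, h y ∂μ) atTop (nhds (∫ y in E, h y ∂μ)) :=
    tendsto_setIntegral_of_monotone hEnm hEnmono hhint.integrableOn
  have hEint : 0 ≤ ∫ y in E, h y ∂μ :=
    ge_of_tendsto htendsto (Filter.Eventually.of_forall hgarsia)
  have hgE : ∫ y in E, h y ∂μ = ∫ y in E, g y ∂μ - lam * (μ E).toReal := by
    rw [hhdef]
    rw [integral_sub (integrable_of_bounded hg hB).integrableOn (integrable_const lam).integrableOn]
    simp [setIntegral_const, mul_comm, measureReal_def]
  have hgabs : ∫ y in E, g y ∂μ ≤ ∫ y, |g y| ∂μ := by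
    have habs : Integrable (fun y => |g y|) μ := (integrable_of_bounded hg hB).abs
    calc ∫ y in E, g y ∂μ ≤ ∫ y in E, |g y| ∂μ :=
          setIntegral_mono_on (integrable_of_bounded hg hB).integrableOn
            habs.integrableOn hEm fun y _ => le_abs_self _
      _ ≤ ∫ y, |g y| ∂μ :=
          setIntegral_le_integral habs (Filter.Eventually.of_forall fun y => abs_nonneg _)
  have hmeasE : lam * (μ E).toReal ≤ ∫ y, |g y| ∂μ := by linarith
  have htoReal : (μ E).toReal ≤ lam⁻¹ * ∫ y, |g y| ∂μ := by
    rw [← mul_le_mul_iff_right₀ hlam]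
    calc lam * (μ E).toReal ≤ ∫ y, |g y| ∂μ := hmeasE
      _ = lam * (lam⁻¹ * ∫ y, |g y| ∂μ) := by field_simp
  calc μ {x | lam < limsup (fun N => avgR S g N x) atTop} ≤ μ (S ⁻¹' E) :=
        measure_mono hincl
    _ = μ E := hS.measure_preimage hEm.nullMeasurableSet
    _ = ENNReal.ofReal (μ E).toReal := (ENNReal.ofReal_toReal (measure_ne_top μ E)).symm
    _ ≤ ENNReal.ofReal (lam⁻¹ * ∫ y, |g y| ∂μ) := ENNReal.ofReal_le_ofReal htoReal

end maximal2

section mainhelpers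

open MeasureTheory Filter Finset

lemma e_norm (α : ℝ) : ‖e α‖ = 1 := by
  unfold e
  have h0 : (2 * (Real.pi : ℂ) * Complex.I * (α : ℂ)).re = 0 := by
    simp [Complex.mul_re, Complex.mul_im]
  rw [Complex.norm_exp, h0, Real.exp_zero]

variable {X : Type*} [MeasurableSpace X] {μ : Measure X}

lemma integral_abs_min_le [IsProbabilityMeasure μ]
    {d : X → ℝ} (hd : Measurable d) {B : ℝ} (hB : 0 ≤ B) (hfin : eLpNorm d 2 μ ≠ ⊤) :
    ∫ x, |min |d x| B| ∂μ ≤ (eLpNorm d 2 μ).toReal := by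
  set g : X → ℝ := fun x => min |d x| B with hgdef
  have hgm : Measurable g := (hd.abs).min measurable_const
  have hg0 : ∀ x, 0 ≤ g x := fun x => le_min (abs_nonneg _) hB
  have habs : ∀ x, |g x| = g x := fun x => abs_of_nonneg (hg0 x)
  have h1 : ∫ x, |g x| ∂μ = ∫ x, g x ∂μ := by
    refine integral_congr_ae (Filter.Eventually.of_forall fun x => habs x)
  have h2 : ∫ x, g x ∂μ = (∫⁻ x, ENNReal.ofReal (g x) ∂μ).toReal :=
    integral_eq_lintegral_of_nonneg_ae (Filter.Eventually.of_forall hg0)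
      hgm.aestronglyMeasurable
  have h3 : ∫⁻ x, ENNReal.ofReal (g x) ∂μ = eLpNorm g 1 μ := by
    rw [eLpNorm_one_eq_lintegral_enorm]
    refine lintegral_congr fun x => ?_
    rw [← ofReal_norm, Real.norm_eq_abs, habs]
  have h4 : eLpNorm g 1 μ ≤ eLpNorm g 2 μ :=
    eLpNorm_le_eLpNorm_of_exponent_le (by norm_num) hgm.aestronglyMeasurable
  have h5 : eLpNorm g 2 μ ≤ eLpNorm d 2 μ := by
    refine eLpNorm_mono fun x => ?_
    rw [Real.norm_eq_abs, Real.norm_eq_abs, habs]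
    exact min_le_left _ _
  rw [h1, h2, h3]
  exact ENNReal.toReal_mono hfin (h4.trans h5)

end mainhelpers

/-- Approximation lemma: let `(X, μ, T)` be an invertible measure-preserving system on a
probability space, `a ≠ b` integers, and `f₁ f₂ ∈ L^∞(μ)`. Suppose `(f₁ⁱ)` and `(f₂ⁱ)` are
sequences in `L^∞(μ)` with `‖f₁ⁱ‖_∞ < M` for all `i`, `fⱼⁱ → fⱼ` in `L²(μ)` for `j = 1, 2`,
and for each `i` there is a full-measure set `Xᵢ` such that for every `x ∈ Xᵢ` and every
real polynomial `p` the averages `(1/N) ∑_{n=1}^N f₁ⁱ(T^{an}x) f₂ⁱ(T^{bn}x) e(p(n))`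
converge. Then there is a full-measure set `X∞` such that for every `x ∈ X∞` and every
real polynomial `p` the averages `(1/N) ∑_{n=1}^N f₁(T^{an}x) f₂(T^{bn}x) e(p(n))`
converge. -/
theorem approximation_polynomial_wiener_wintner_double_recurrence
    {X : Type*} [MeasurableSpace X] (μ : Measure X) [IsProbabilityMeasure μ]
    (T : X ≃ᵐ X) (hT : MeasurePreserving T μ μ)
    (a b : ℤ) (hab : a ≠ b)
    (f₁ f₂ : X → ℝ) (hf₁ : MemLp f₁ ⊤ μ) (hf₂ : MemLp f₂ ⊤ μ)
    (f₁' f₂' : ℕ → X → ℝ)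
    (hf₁' : ∀ i, MemLp (f₁' i) ⊤ μ) (hf₂' : ∀ i, MemLp (f₂' i) ⊤ μ)
    (M : ℝ) (hM : 0 < M)
    (hMbound : ∀ i, eLpNorm (f₁' i) ⊤ μ < ENNReal.ofReal M)
    (hconv₁ : Tendsto (fun i => eLpNorm (f₁' i - f₁) 2 μ) atTop (nhds 0))
    (hconv₂ : Tendsto (fun i => eLpNorm (f₂' i - f₂) 2 μ) atTop (nhds 0))
    (hXi : ∀ i, ∃ Xi : Set X, μ Xiᶜ = 0 ∧ ∀ x ∈ Xi, ∀ k : ℕ, 0 < k →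
      ∀ p : Polynomial ℝ, p.natDegree ≤ k →
        ∃ L : ℂ, Tendsto (fun N : ℕ => wAvg T.toEquiv a b (f₁' i) (f₂' i) x p N)
          atTop (nhds L)) :
    ∃ Xinf : Set X, μ Xinfᶜ = 0 ∧ ∀ x ∈ Xinf, ∀ p : Polynomial ℝ,
      ∃ L : ℂ, Tendsto (fun N : ℕ => wAvg T.toEquiv a b f₁ f₂ x p N) atTop (nhds L) := by
  classical
  choose XiS hXi0 hXiconv using hXi
  -- the two shift maps
  set S₁ : X → X := iterZ T.toEquiv a with hS₁def
  set S₂ : X → X := iterZ T.toEquiv b with hS₂def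
  have hS₁m : Measurable S₁ := iterZ_measurable T a
  have hS₂m : Measurable S₂ := iterZ_measurable T b
  have hS₁e : MeasurableEmbedding S₁ := iterZ_embedding T a
  have hS₂e : MeasurableEmbedding S₂ := iterZ_embedding T b
  have hS₁p : MeasurePreserving S₁ μ μ := iterZ_measurePreserving T hT a
  have hS₂p : MeasurePreserving S₂ μ μ := iterZ_measurePreserving T hT b
  -- subsequence with fast L² convergence
  have hsubseq : ∀ m : ℕ, ∃ i : ℕ,
      eLpNorm (f₁' i - f₁) 2 μ < ENNReal.ofReal ((4:ℝ)⁻¹ ^ m) ∧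
      eLpNorm (f₂' i - f₂) 2 μ < ENNReal.ofReal ((4:ℝ)⁻¹ ^ m) := by
    intro m
    have hpos : (0:ENNReal) < ENNReal.ofReal ((4:ℝ)⁻¹ ^ m) :=
      ENNReal.ofReal_pos.mpr (by positivity)
    exact ((hconv₁.eventually (gt_mem_nhds hpos)).and
      (hconv₂.eventually (gt_mem_nhds hpos))).exists
  choose φ hφ₁ hφ₂ using hsubseq
  -- measurable representatives of the differences
  have hrep₁ : ∀ m : ℕ, ∃ d : X → ℝ, Measurable d ∧ (f₁ - f₁' (φ m)) =ᵐ[μ] d := by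
    intro m
    have h := (hf₁.1.sub (hf₁' (φ m)).1).aemeasurable
    exact ⟨h.mk _, h.measurable_mk, h.ae_eq_mk⟩
  have hrep₂ : ∀ m : ℕ, ∃ d : X → ℝ, Measurable d ∧ (f₂ - f₂' (φ m)) =ᵐ[μ] d := by
    intro m
    have h := (hf₂.1.sub (hf₂' (φ m)).1).aemeasurable
    exact ⟨h.mk _, h.measurable_mk, h.ae_eq_mk⟩
  choose d₁ hd₁m hd₁e using hrep₁
  choose d₂ hd₂m hd₂e using hrep₂
  -- essential sup bounds for the representatives
  have hfin₁ : ∀ m, eLpNormEssSup (d₁ m) μ ≠ ⊤ := by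
    intro m
    rw [← eLpNormEssSup_congr_ae (hd₁e m), ← eLpNorm_exponent_top]
    exact (hf₁.sub (hf₁' (φ m))).2.ne
  have hfin₂ : ∀ m, eLpNormEssSup (d₂ m) μ ≠ ⊤ := by
    intro m
    rw [← eLpNormEssSup_congr_ae (hd₂e m), ← eLpNorm_exponent_top]
    exact (hf₂.sub (hf₂' (φ m))).2.ne
  set B₁ : ℕ → ℝ := fun m => (eLpNormEssSup (d₁ m) μ).toReal + 1 with hB₁def
  set B₁' : ℕ → ℝ := fun m => (eLpNormEssSup (d₂ m) μ).toReal + 1 with hB₁'def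
  have hB₁pos : ∀ m, 0 < B₁ m := fun m => by positivity
  have hB₁'pos : ∀ m, 0 < B₁' m := fun m => by positivity
  -- truncated nonnegative versions
  set g1 : ℕ → X → ℝ := fun m x => min |d₁ m x| (B₁ m) with hg1def
  set g2 : ℕ → X → ℝ := fun m x => min |d₂ m x| (B₁' m) with hg2def
  have hg1m : ∀ m, Measurable (g1 m) := fun m => (hd₁m m).abs.min measurable_const
  have hg2m : ∀ m, Measurable (g2 m) := fun m => (hd₂m m).abs.min measurable_const
  have hg1nn : ∀ m x, 0 ≤ g1 m x := fun m x => le_min (abs_nonneg _) (hB₁pos m).le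
  have hg2nn : ∀ m x, 0 ≤ g2 m x := fun m x => le_min (abs_nonneg _) (hB₁'pos m).le
  have hg1bd : ∀ m x, |g1 m x| ≤ B₁ m := fun m x => by
    rw [abs_of_nonneg (hg1nn m x)]; exact min_le_right _ _
  have hg2bd : ∀ m x, |g2 m x| ≤ B₁' m := fun m x => by
    rw [abs_of_nonneg (hg2nn m x)]; exact min_le_right _ _
  -- L² norms of representatives
  have heq₁ : ∀ m, eLpNorm (d₁ m) 2 μ = eLpNorm (f₁' (φ m) - f₁) 2 μ := by
    intro m
    rw [← eLpNorm_congr_ae (hd₁e m), show f₁ - f₁' (φ m) = -(f₁' (φ m) - f₁) by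
      funext x; simp, eLpNorm_neg]
  have heq₂ : ∀ m, eLpNorm (d₂ m) 2 μ = eLpNorm (f₂' (φ m) - f₂) 2 μ := by
    intro m
    rw [← eLpNorm_congr_ae (hd₂e m), show f₂ - f₂' (φ m) = -(f₂' (φ m) - f₂) by
      funext x; simp, eLpNorm_neg]
  -- integral bounds
  have hint₁ : ∀ m, ∫ x, |g1 m x| ∂μ ≤ (4:ℝ)⁻¹ ^ m := by
    intro m
    have h1 : eLpNorm (d₁ m) 2 μ ≤ ENNReal.ofReal ((4:ℝ)⁻¹ ^ m) := by
      rw [heq₁ m]; exact (hφ₁ m).le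
    refine le_trans (integral_abs_min_le (hd₁m m) (hB₁pos m).le
      (lt_of_le_of_lt h1 ENNReal.ofReal_lt_top).ne) ?_
    calc (eLpNorm (d₁ m) 2 μ).toReal ≤ (ENNReal.ofReal ((4:ℝ)⁻¹ ^ m)).toReal :=
          ENNReal.toReal_mono ENNReal.ofReal_ne_top h1
      _ = (4:ℝ)⁻¹ ^ m := ENNReal.toReal_ofReal (by positivity)
  have hint₂ : ∀ m, ∫ x, |g2 m x| ∂μ ≤ (4:ℝ)⁻¹ ^ m := by
    intro m
    have h1 : eLpNorm (d₂ m) 2 μ ≤ ENNReal.ofReal ((4:ℝ)⁻¹ ^ m) := by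
      rw [heq₂ m]; exact (hφ₂ m).le
    refine le_trans (integral_abs_min_le (hd₂m m) (hB₁'pos m).le
      (lt_of_le_of_lt h1 ENNReal.ofReal_lt_top).ne) ?_
    calc (eLpNorm (d₂ m) 2 μ).toReal ≤ (ENNReal.ofReal ((4:ℝ)⁻¹ ^ m)).toReal :=
          ENNReal.toReal_mono ENNReal.ofReal_ne_top h1
      _ = (4:ℝ)⁻¹ ^ m := ENNReal.toReal_ofReal (by positivity)
  -- exceptional sets from the maximal inequality
  set s : ℕ → Set X := fun m =>
    {x | (2:ℝ)⁻¹ ^ m < limsup (fun N => avgR S₁ (g1 m) N x) atTop} ∪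
    {x | (2:ℝ)⁻¹ ^ m < limsup (fun N => avgR S₂ (g2 m) N x) atTop} with hsdef
  have hlampos : ∀ m : ℕ, (0:ℝ) < (2:ℝ)⁻¹ ^ m := fun m => by positivity
  have hkey : ∀ m : ℕ, ((2:ℝ)⁻¹ ^ m)⁻¹ * ((4:ℝ)⁻¹ ^ m) = (2:ℝ)⁻¹ ^ m := by
    intro m
    rw [← inv_pow, inv_inv, ← mul_pow]
    norm_num
  have hμs : ∀ m, μ (s m) ≤ 2 * ENNReal.ofReal ((2:ℝ)⁻¹ ^ m) := by
    intro m
    have h1 := maximal_ineq hS₁m hS₁e hS₁p (hg1m m) (hg1bd m) (hlampos m)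
    have h2 := maximal_ineq hS₂m hS₂e hS₂p (hg2m m) (hg2bd m) (hlampos m)
    have hb1 : ENNReal.ofReal (((2:ℝ)⁻¹ ^ m)⁻¹ * ∫ x, |g1 m x| ∂μ)
        ≤ ENNReal.ofReal ((2:ℝ)⁻¹ ^ m) := by
      refine ENNReal.ofReal_le_ofReal ?_
      calc ((2:ℝ)⁻¹ ^ m)⁻¹ * ∫ x, |g1 m x| ∂μ
          ≤ ((2:ℝ)⁻¹ ^ m)⁻¹ * ((4:ℝ)⁻¹ ^ m) :=
            mul_le_mul_of_nonneg_left (hint₁ m) (by positivity)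
        _ = (2:ℝ)⁻¹ ^ m := hkey m
    have hb2 : ENNReal.ofReal (((2:ℝ)⁻¹ ^ m)⁻¹ * ∫ x, |g2 m x| ∂μ)
        ≤ ENNReal.ofReal ((2:ℝ)⁻¹ ^ m) := by
      refine ENNReal.ofReal_le_ofReal ?_
      calc ((2:ℝ)⁻¹ ^ m)⁻¹ * ∫ x, |g2 m x| ∂μ
          ≤ ((2:ℝ)⁻¹ ^ m)⁻¹ * ((4:ℝ)⁻¹ ^ m) :=
            mul_le_mul_of_nonneg_left (hint₂ m) (by positivity)
        _ = (2:ℝ)⁻¹ ^ m := hkey m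
    calc μ (s m) ≤ μ {x | (2:ℝ)⁻¹ ^ m < limsup (fun N => avgR S₁ (g1 m) N x) atTop}
          + μ {x | (2:ℝ)⁻¹ ^ m < limsup (fun N => avgR S₂ (g2 m) N x) atTop} :=
          measure_union_le _ _
      _ ≤ ENNReal.ofReal ((2:ℝ)⁻¹ ^ m) + ENNReal.ofReal ((2:ℝ)⁻¹ ^ m) :=
          add_le_add (h1.trans hb1) (h2.trans hb2)
      _ = 2 * ENNReal.ofReal ((2:ℝ)⁻¹ ^ m) := by ring
  have htsum : ∑' m, μ (s m) ≠ ⊤ := by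
    have hsummable : Summable (fun m : ℕ => (2:ℝ)⁻¹ ^ m) :=
      summable_geometric_of_lt_one (by norm_num) (by norm_num)
    have h1 : ∑' m, μ (s m) ≤ ∑' m : ℕ, 2 * ENNReal.ofReal ((2:ℝ)⁻¹ ^ m) :=
      ENNReal.tsum_le_tsum hμs
    have h2 : ∑' m : ℕ, 2 * ENNReal.ofReal ((2:ℝ)⁻¹ ^ m)
        = 2 * ENNReal.ofReal (∑' m : ℕ, (2:ℝ)⁻¹ ^ m) := by
      rw [ENNReal.tsum_mul_left, ENNReal.ofReal_tsum_of_nonneg (fun m => by positivity) hsummable]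
    refine ne_top_of_le_ne_top ?_ h1
    rw [h2]
    exact (ENNReal.mul_lt_top (by norm_num) ENNReal.ofReal_lt_top).ne
  have hBC : ∀ᵐ x ∂μ, ∀ᶠ m in atTop, x ∉ s m := ae_eventually_notMem htsum
  -- the uniform bound B₂ for f₂
  set B₂ : ℝ := (eLpNormEssSup f₂ μ).toReal with hB₂def
  have hB₂nn : 0 ≤ B₂ := ENNReal.toReal_nonneg
  have hfin₂' : eLpNormEssSup f₂ μ ≠ ⊤ := by
    rw [← eLpNorm_exponent_top]; exact hf₂.2.ne
  -- a.e. statements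
  have haeM : ∀ i, ∀ᵐ y ∂μ, |f₁' i y| ≤ M := by
    intro i
    filter_upwards [ae_le_eLpNormEssSup (f := f₁' i) (μ := μ)] with y hy
    have h2 : (‖f₁' i y‖₊ : ENNReal) ≤ ENNReal.ofReal M := by
      refine hy.trans ?_
      rw [← eLpNorm_exponent_top]
      exact (hMbound i).le
    rw [← enorm_eq_nnnorm, ← ofReal_norm] at h2
    have := (ENNReal.ofReal_le_ofReal_iff hM.le).mp h2
    rwa [Real.norm_eq_abs] at this
  have haeB₂ : ∀ᵐ y ∂μ, |f₂ y| ≤ B₂ := by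
    filter_upwards [ae_le_eLpNormEssSup (f := f₂) (μ := μ)] with y hy
    have := ENNReal.toReal_mono hfin₂' hy
    rwa [toReal_enorm, Real.norm_eq_abs] at this
  have haed₁ : ∀ m, ∀ᵐ y ∂μ, |d₁ m y| ≤ B₁ m := by
    intro m
    filter_upwards [ae_le_eLpNormEssSup (f := d₁ m) (μ := μ)] with y hy
    have := ENNReal.toReal_mono (hfin₁ m) hy
    rw [toReal_enorm, Real.norm_eq_abs] at this
    calc |d₁ m y| ≤ (eLpNormEssSup (d₁ m) μ).toReal := this
      _ ≤ B₁ m := by rw [hB₁def]; simp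
  have haed₂ : ∀ m, ∀ᵐ y ∂μ, |d₂ m y| ≤ B₁' m := by
    intro m
    filter_upwards [ae_le_eLpNormEssSup (f := d₂ m) (μ := μ)] with y hy
    have := ENNReal.toReal_mono (hfin₂ m) hy
    rw [toReal_enorm, Real.norm_eq_abs] at this
    calc |d₂ m y| ≤ (eLpNormEssSup (d₂ m) μ).toReal := this
      _ ≤ B₁' m := by rw [hB₁'def]; simp
  -- combine all a.e. conditions
  have hae : ∀ᵐ x ∂μ,
      (∀ m, x ∈ XiS (φ m)) ∧
      (∀ᶠ m in atTop, x ∉ s m) ∧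
      (∀ m (n : ℕ), |f₁' (φ m) (iterZ T.toEquiv (a * n) x)| ≤ M) ∧
      (∀ n : ℕ, |f₂ (iterZ T.toEquiv (b * n) x)| ≤ B₂) ∧
      (∀ m (n : ℕ), (f₁ - f₁' (φ m)) (iterZ T.toEquiv (a * n) x)
        = d₁ m (iterZ T.toEquiv (a * n) x)) ∧
      (∀ m (n : ℕ), |d₁ m (iterZ T.toEquiv (a * n) x)| ≤ B₁ m) ∧
      (∀ m (n : ℕ), (f₂ - f₂' (φ m)) (iterZ T.toEquiv (b * n) x)
        = d₂ m (iterZ T.toEquiv (b * n) x)) ∧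
      (∀ m (n : ℕ), |d₂ m (iterZ T.toEquiv (b * n) x)| ≤ B₁' m) := by
    have c1 : ∀ᵐ x ∂μ, ∀ m, x ∈ XiS (φ m) :=
      ae_all_iff.mpr fun m => mem_ae_iff.mpr (hXi0 (φ m))
    have c3 : ∀ᵐ x ∂μ, ∀ m (n : ℕ), |f₁' (φ m) (iterZ T.toEquiv (a * n) x)| ≤ M :=
      ae_all_iff.mpr fun m => ae_all_iff.mpr fun n => iterZ_ae T hT (a * n) (haeM (φ m))
    have c4 : ∀ᵐ x ∂μ, ∀ n : ℕ, |f₂ (iterZ T.toEquiv (b * n) x)| ≤ B₂ :=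
      ae_all_iff.mpr fun n => iterZ_ae T hT (b * n) haeB₂
    have c5 : ∀ᵐ x ∂μ, ∀ m (n : ℕ), (f₁ - f₁' (φ m)) (iterZ T.toEquiv (a * n) x)
        = d₁ m (iterZ T.toEquiv (a * n) x) :=
      ae_all_iff.mpr fun m => ae_all_iff.mpr fun n => iterZ_ae T hT (a * n) (hd₁e m)
    have c6 : ∀ᵐ x ∂μ, ∀ m (n : ℕ), |d₁ m (iterZ T.toEquiv (a * n) x)| ≤ B₁ m :=
      ae_all_iff.mpr fun m => ae_all_iff.mpr fun n => iterZ_ae T hT (a * n) (haed₁ m)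
    have c7 : ∀ᵐ x ∂μ, ∀ m (n : ℕ), (f₂ - f₂' (φ m)) (iterZ T.toEquiv (b * n) x)
        = d₂ m (iterZ T.toEquiv (b * n) x) :=
      ae_all_iff.mpr fun m => ae_all_iff.mpr fun n => iterZ_ae T hT (b * n) (hd₂e m)
    have c8 : ∀ᵐ x ∂μ, ∀ m (n : ℕ), |d₂ m (iterZ T.toEquiv (b * n) x)| ≤ B₁' m :=
      ae_all_iff.mpr fun m => ae_all_iff.mpr fun n => iterZ_ae T hT (b * n) (haed₂ m)
    filter_upwards [c1, hBC, c3, c4, c5, c6, c7, c8] with x h1 h2 h3 h4 h5 h6 h7 h8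
    exact ⟨h1, h2, h3, h4, h5, h6, h7, h8⟩
  refine ⟨_, mem_ae_iff.mp hae, ?_⟩
  rintro x ⟨hx1, hx2, hx3, hx4, hx5, hx6, hx7, hx8⟩ p
  -- notation
  set u : ℕ → ℂ := fun N => wAvg T.toEquiv a b f₁ f₂ x p N with hudef
  set v : ℕ → ℕ → ℂ := fun m N => wAvg T.toEquiv a b (f₁' (φ m)) (f₂' (φ m)) x p N with hvdef
  -- the key estimate
  have hest : ∀ m N, ‖u N - v m N‖
      ≤ B₂ * avgR S₁ (g1 m) N x + M * avgR S₂ (g2 m) N x := by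
    intro m N
    have hterm : ∀ n ∈ Finset.Icc 1 N,
        ‖((f₁ (iterZ T.toEquiv (a * n) x) : ℂ) * (f₂ (iterZ T.toEquiv (b * n) x) : ℂ)
            * e (p.eval (n : ℝ)))
          - ((f₁' (φ m) (iterZ T.toEquiv (a * n) x) : ℂ)
            * (f₂' (φ m) (iterZ T.toEquiv (b * n) x) : ℂ) * e (p.eval (n : ℝ)))‖
        ≤ B₂ * g1 m (S₁^[n] x) + M * g2 m (S₂^[n] x) := by
      intro n _
      set y₁ := iterZ T.toEquiv (a * n) x with hy₁def
      set y₂ := iterZ T.toEquiv (b * n) x with hy₂def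
      have hy₁ : y₁ = S₁^[n] x := iterZ_mul_nat T.toEquiv a n x
      have hy₂ : y₂ = S₂^[n] x := iterZ_mul_nat T.toEquiv b n x
      have hfactor : ((f₁ y₁ : ℂ) * (f₂ y₂ : ℂ) * e (p.eval (n : ℝ)))
          - ((f₁' (φ m) y₁ : ℂ) * (f₂' (φ m) y₂ : ℂ) * e (p.eval (n : ℝ)))
          = (((f₁ y₁ : ℂ) - (f₁' (φ m) y₁ : ℂ)) * (f₂ y₂ : ℂ)
            + (f₁' (φ m) y₁ : ℂ) * ((f₂ y₂ : ℂ) - (f₂' (φ m) y₂ : ℂ))) * e (p.eval (n : ℝ)) := by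
        ring
      rw [hfactor, norm_mul, e_norm, mul_one]
      have hd1 : ‖(f₁ y₁ : ℂ) - (f₁' (φ m) y₁ : ℂ)‖ = g1 m (S₁^[n] x) := by
        rw [← Complex.ofReal_sub, Complex.norm_real, Real.norm_eq_abs]
        have h5' := hx5 m n
        have h6' := hx6 m n
        rw [Pi.sub_apply] at h5'
        rw [show f₁ y₁ - f₁' (φ m) y₁ = d₁ m y₁ from h5', ← hy₁, hg1def]
        exact (min_eq_left (h6'.trans (by rw [hB₁def]))).symm
      have hd2 : ‖(f₂ y₂ : ℂ) - (f₂' (φ m) y₂ : ℂ)‖ = g2 m (S₂^[n] x) := by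
        rw [← Complex.ofReal_sub, Complex.norm_real, Real.norm_eq_abs]
        have h7' := hx7 m n
        have h8' := hx8 m n
        rw [Pi.sub_apply] at h7'
        rw [show f₂ y₂ - f₂' (φ m) y₂ = d₂ m y₂ from h7', ← hy₂, hg2def]
        exact (min_eq_left (h8'.trans (by rw [hB₁'def]))).symm
      calc ‖((f₁ y₁ : ℂ) - (f₁' (φ m) y₁ : ℂ)) * (f₂ y₂ : ℂ)
            + (f₁' (φ m) y₁ : ℂ) * ((f₂ y₂ : ℂ) - (f₂' (φ m) y₂ : ℂ))‖
          ≤ ‖(f₁ y₁ : ℂ) - (f₁' (φ m) y₁ : ℂ)‖ * ‖(f₂ y₂ : ℂ)‖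
            + ‖(f₁' (φ m) y₁ : ℂ)‖ * ‖(f₂ y₂ : ℂ) - (f₂' (φ m) y₂ : ℂ)‖ := by
            refine le_trans (norm_add_le _ _) ?_
            rw [norm_mul, norm_mul]
        _ ≤ g1 m (S₁^[n] x) * B₂ + M * g2 m (S₂^[n] x) := by
            rw [hd1, hd2]
            refine add_le_add ?_ ?_
            · refine mul_le_mul_of_nonneg_left ?_ (hg1nn m _)
              rw [Complex.norm_real, Real.norm_eq_abs]; exact hx4 n
            · refine mul_le_mul_of_nonneg_right ?_ (hg2nn m _)
              rw [Complex.norm_real, Real.norm_eq_abs]; exact hx3 m n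
        _ = B₂ * g1 m (S₁^[n] x) + M * g2 m (S₂^[n] x) := by ring
    have hdiff : u N - v m N = (N : ℂ)⁻¹ * ∑ n ∈ Finset.Icc 1 N,
        (((f₁ (iterZ T.toEquiv (a * n) x) : ℂ) * (f₂ (iterZ T.toEquiv (b * n) x) : ℂ)
            * e (p.eval (n : ℝ)))
          - ((f₁' (φ m) (iterZ T.toEquiv (a * n) x) : ℂ)
            * (f₂' (φ m) (iterZ T.toEquiv (b * n) x) : ℂ) * e (p.eval (n : ℝ)))) := by
      rw [hudef, hvdef]
      simp only [wAvg]
      rw [← mul_sub, ← Finset.sum_sub_distrib]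
    calc ‖u N - v m N‖ = ‖(N : ℂ)⁻¹‖ * ‖∑ n ∈ Finset.Icc 1 N,
          (((f₁ (iterZ T.toEquiv (a * n) x) : ℂ) * (f₂ (iterZ T.toEquiv (b * n) x) : ℂ)
              * e (p.eval (n : ℝ)))
            - ((f₁' (φ m) (iterZ T.toEquiv (a * n) x) : ℂ)
              * (f₂' (φ m) (iterZ T.toEquiv (b * n) x) : ℂ) * e (p.eval (n : ℝ))))‖ := by
          rw [hdiff, norm_mul]
      _ ≤ (N : ℝ)⁻¹ * ∑ n ∈ Finset.Icc 1 N,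
            (B₂ * g1 m (S₁^[n] x) + M * g2 m (S₂^[n] x)) := by
          refine mul_le_mul ?_ (le_trans (norm_sum_le _ _) (Finset.sum_le_sum hterm))
            (norm_nonneg _) (by positivity)
          rw [norm_inv, Complex.norm_natCast]
      _ = B₂ * avgR S₁ (g1 m) N x + M * avgR S₂ (g2 m) N x := by
          unfold avgR
          rw [Finset.sum_add_distrib, ← Finset.mul_sum, ← Finset.mul_sum]
          ring
  -- Cauchy sequence argument
  suffices hcauchy : CauchySeq u by
    obtain ⟨L, hL⟩ := cauchySeq_tendsto_of_complete hcauchy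
    exact ⟨L, hL⟩
  refine Metric.cauchySeq_iff'.mpr fun ε hε => ?_
  -- choose a good index m
  have htend : Tendsto (fun m : ℕ => ((B₂ + M) * 2) * (2:ℝ)⁻¹ ^ m) atTop (nhds 0) := by
    have := (tendsto_pow_atTop_nhds_zero_of_lt_one (by norm_num : (0:ℝ) ≤ 2⁻¹)
      (by norm_num : (2:ℝ)⁻¹ < 1)).const_mul ((B₂ + M) * 2)
    simpa using this
  have hεq : (0:ℝ) < ε / 4 := by linarith
  obtain ⟨m, hm1, hm2⟩ := ((htend.eventually (gt_mem_nhds hεq)).and hx2).exists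
  -- from x ∉ s m
  have hns : x ∉ s m := hm2
  rw [hsdef] at hns
  push_neg at hns
  simp only [Set.mem_union, Set.mem_setOf_eq, not_or, not_lt] at hns
  obtain ⟨hns₁, hns₂⟩ := hns
  set δ : ℝ := 2 * (2:ℝ)⁻¹ ^ m with hδdef
  have hδlt : (B₂ + M) * δ < ε / 4 := by
    rw [hδdef]
    calc (B₂ + M) * (2 * (2:ℝ)⁻¹ ^ m) = ((B₂ + M) * 2) * (2:ℝ)⁻¹ ^ m := by ring
      _ < ε / 4 := hm1
  have hlt₁ : limsup (fun N => avgR S₁ (g1 m) N x) atTop < δ :=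
    lt_of_le_of_lt hns₁ (by rw [hδdef]; nlinarith [hlampos m])
  have hlt₂ : limsup (fun N => avgR S₂ (g2 m) N x) atTop < δ :=
    lt_of_le_of_lt hns₂ (by rw [hδdef]; nlinarith [hlampos m])
  have hbd₁ : IsBoundedUnder (· ≤ ·) atTop (fun N => avgR S₁ (g1 m) N x) :=
    isBoundedUnder_of ⟨B₁ m, fun N =>
      (abs_le.mp (abs_avgR_le S₁ (g1 m) (hg1bd m) (hB₁pos m).le N x)).2⟩
  have hbd₂ : IsBoundedUnder (· ≤ ·) atTop (fun N => avgR S₂ (g2 m) N x) :=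
    isBoundedUnder_of ⟨B₁' m, fun N =>
      (abs_le.mp (abs_avgR_le S₂ (g2 m) (hg2bd m) (hB₁'pos m).le N x)).2⟩
  have hEv : ∀ᶠ N in atTop, avgR S₁ (g1 m) N x < δ ∧ avgR S₂ (g2 m) N x < δ :=
    (eventually_lt_of_limsup_lt hlt₁ hbd₁).and (eventually_lt_of_limsup_lt hlt₂ hbd₂)
  obtain ⟨N₁, hN₁⟩ := eventually_atTop.mp hEv
  -- v m is Cauchy
  obtain ⟨L, hL⟩ := hXiconv (φ m) x (hx1 m) (p.natDegree + 1) (Nat.succ_pos _) p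
    (Nat.le_succ _)
  obtain ⟨N₂, hN₂⟩ := Metric.cauchySeq_iff.mp hL.cauchySeq (ε / 4) hεq
  refine ⟨max N₁ N₂, fun n hn => ?_⟩
  have hub : ∀ k, N₁ ≤ k → ‖u k - v m k‖ < ε / 4 := by
    intro k hk
    obtain ⟨ha1, ha2⟩ := hN₁ k hk
    calc ‖u k - v m k‖ ≤ B₂ * avgR S₁ (g1 m) k x + M * avgR S₂ (g2 m) k x := hest m k
      _ ≤ B₂ * δ + M * δ := add_le_add
          (mul_le_mul_of_nonneg_left ha1.le hB₂nn)
          (mul_le_mul_of_nonneg_left ha2.le hM.le)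
      _ = (B₂ + M) * δ := by ring
      _ < ε / 4 := hδlt
  have h1 : ‖u n - v m n‖ < ε / 4 := hub n (le_trans (le_max_left _ _) hn)
  have h2 : ‖u (max N₁ N₂) - v m (max N₁ N₂)‖ < ε / 4 := hub _ (le_max_left _ _)
  have h3 : dist (v m n) (v m (max N₁ N₂)) < ε / 4 :=
    hN₂ n (le_trans (le_max_right _ _) hn) (max N₁ N₂) (le_max_right _ _)
  have hdist : dist (u n) (u (max N₁ N₂)) ≤ ‖u n - v m n‖
      + dist (v m n) (v m (max N₁ N₂)) + ‖u (max N₁ N₂) - v m (max N₁ N₂)‖ := by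
    rw [dist_eq_norm, dist_eq_norm]
    calc ‖u n - u (max N₁ N₂)‖
        = ‖(u n - v m n) + (v m n - v m (max N₁ N₂)) + (v m (max N₁ N₂) - u (max N₁ N₂))‖ := by
          ring_nf
      _ ≤ ‖u n - v m n‖ + ‖v m n - v m (max N₁ N₂)‖ + ‖v m (max N₁ N₂) - u (max N₁ N₂)‖ :=
          norm_add₃_le
      _ = ‖u n - v m n‖ + ‖v m n - v m (max N₁ N₂)‖ + ‖u (max N₁ N₂) - v m (max N₁ N₂)‖ := by
          rw [norm_sub_rev (v m (max N₁ N₂)) (u (max N₁ N₂))]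
  linarith
end

section
/- Let $(a_n)_{n=0}^{N-1}$ be a finite sequence of complex numbers and let $H$ be an integer with $0 \leq H \leq N-1$. Then $\left| \frac{1}{N} \sum_{n=0}^{N-1} a_n \right|^2 \leq \frac{N+H}{N^2(H+1)} \sum_{n=0}^{N-1} |a_n|^2 + \frac{2(N+H)}{N^2(H+1)^2} \sum_{h=1}^{H} (H+1-h) \, \mathrm{Re}\left( \sum_{n=0}^{N-h-1} a_n \overline{a_{n+h}} \right)$. -/
open Finset

private lemma vdc_map_Icc (n : ℕ) :
    Finset.Icc 1 n = (Finset.range n).map (addRightEmbedding 1) := by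
  rw [Finset.range_eq_Ico, Finset.map_add_right_Ico, Finset.Ico_add_one_right_eq_Icc]

private lemma vdc_reflect (n : ℕ) (φ : ℕ → ℝ) :
    ∑ h ∈ range n, φ (n - h) = ∑ d ∈ Icc 1 n, φ d := by
  rw [vdc_map_Icc, Finset.sum_map]
  simp only [addRightEmbedding_apply]
  rw [← Finset.sum_range_reflect (fun j => φ (j+1)) n]
  refine Finset.sum_congr rfl fun j hj => ?_
  simp only [Finset.mem_range] at hj
  congr 1; omega

private lemma vdc_double_succ {M : Type*} [AddCommMonoid M] (ψ : ℕ → ℕ → M) (n : ℕ) :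
    ∑ h ∈ range (n+1), ∑ h' ∈ range (n+1), ψ h h'
      = (∑ h ∈ range n, ∑ h' ∈ range n, ψ h h')
        + ∑ h' ∈ range n, ψ n h' + ∑ h ∈ range n, ψ h n + ψ n n := by
  rw [Finset.sum_range_succ]
  rw [Finset.sum_congr rfl (fun h _ => Finset.sum_range_succ (ψ h) n)]
  rw [Finset.sum_add_distrib, Finset.sum_range_succ (fun h' => ψ n h') n]
  abel

private lemma vdc_pair_count (H : ℕ) (φ : ℕ → ℝ) :
    ∑ h ∈ range (H+1), ∑ h' ∈ range (H+1), φ ((h' - h) + (h - h'))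
      = ((H:ℝ)+1) * φ 0 + 2 * ∑ d ∈ Icc 1 H, ((H:ℝ)+1-(d:ℝ)) * φ d := by
  induction H with
  | zero => simp
  | succ H ih =>
    rw [vdc_double_succ, ih]
    have r1 : ∑ h' ∈ range (H+1), φ ((h' - (H+1)) + ((H+1) - h')) = ∑ d ∈ Icc 1 (H+1), φ d := by
      rw [← vdc_reflect (H+1) φ]
      refine Finset.sum_congr rfl fun h hh => ?_
      simp only [Finset.mem_range] at hh
      congr 1; omega
    have r2 : ∑ h ∈ range (H+1), φ (((H+1) - h) + (h - (H+1))) = ∑ d ∈ Icc 1 (H+1), φ d := by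
      rw [← vdc_reflect (H+1) φ]
      refine Finset.sum_congr rfl fun h hh => ?_
      simp only [Finset.mem_range] at hh
      congr 1; omega
    rw [r1, r2]
    rw [show ((H+1) - (H+1)) + ((H+1) - (H+1)) = 0 from by omega]
    rw [Finset.sum_Icc_succ_top (by omega : 1 ≤ H + 1),
        Finset.sum_Icc_succ_top (by omega : 1 ≤ H + 1)]
    have e : ∑ d ∈ Icc 1 H, (((H+1:ℕ):ℝ)+1-(d:ℝ)) * φ d
        = ∑ d ∈ Icc 1 H, (((H:ℝ)+1-(d:ℝ)) * φ d + φ d) := by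
      refine Finset.sum_congr rfl fun d _ => by push_cast; ring
    rw [e, Finset.sum_add_distrib]
    push_cast
    ring

private lemma vdc_int_sum (K : ℕ) (g : ℤ → ℂ) (f : ℕ → ℂ) (hgf : ∀ n < K, g n = f n) :
    ∑ m ∈ Finset.Ico (0:ℤ) (K:ℤ), g m = ∑ n ∈ range K, f n := by
  have h : Finset.Ico (0:ℤ) (K:ℤ)
      = (range K).map (⟨fun (n : ℕ) => (n : ℤ), Nat.cast_injective⟩ : ℕ ↪ ℤ) := by
    ext x
    simp only [Finset.mem_Ico, Finset.mem_map, Finset.mem_range, Function.Embedding.coeFn_mk]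
    constructor
    · rintro ⟨h0, hK⟩; exact ⟨x.toNat, by omega, by omega⟩
    · rintro ⟨n, hn, rfl⟩; omega
  rw [h, Finset.sum_map]
  exact Finset.sum_congr rfl fun n hn => hgf n (Finset.mem_range.mp hn)

private lemma vdc_shrink (g : ℤ → ℂ) (I : Finset ℤ) (K : ℕ)
    (hsub : Finset.Ico (0:ℤ) (K:ℤ) ⊆ I)
    (h0 : ∀ m ∈ I, ¬(0 ≤ m ∧ m < (K:ℤ)) → g m = 0) :
    ∑ m ∈ I, g m = ∑ m ∈ Finset.Ico (0:ℤ) (K:ℤ), g m := by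
  refine (Finset.sum_subset hsub fun x hx hnx => h0 x hx ?_).symm
  simpa [Finset.mem_Ico] using hnx

private lemma vdc_shift (g : ℤ → ℂ) (α β t : ℤ) :
    ∑ n ∈ Finset.Ico α β, g (n + t) = ∑ m ∈ Finset.Ico (α + t) (β + t), g m := by
  rw [← Finset.map_add_right_Ico, Finset.sum_map]
  rfl


/-- van der Corput's inequality: for complex numbers `a₀, …, a_{N-1}` and an integer
`H` with `0 ≤ H ≤ N - 1`,
`|(1/N) ∑_{n=0}^{N-1} aₙ|² ≤ (N+H)/(N²(H+1)) ∑_{n=0}^{N-1} |aₙ|²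
  + 2(N+H)/(N²(H+1)²) ∑_{h=1}^{H} (H+1-h) Re(∑_{n=0}^{N-h-1} aₙ conj(a_{n+h}))`. -/
theorem van_der_corput_inequality
    (N H : ℕ) (hN : 1 ≤ N) (hH : H ≤ N - 1) (a : ℕ → ℂ) :
    ‖(N : ℂ)⁻¹ * ∑ n ∈ Finset.range N, a n‖ ^ 2 ≤
      ((N : ℝ) + H) / ((N : ℝ) ^ 2 * ((H : ℝ) + 1)) *
          ∑ n ∈ Finset.range N, ‖a n‖ ^ 2
        + 2 * ((N : ℝ) + H) / ((N : ℝ) ^ 2 * ((H : ℝ) + 1) ^ 2) *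
            ∑ h ∈ Finset.Icc 1 H, ((H : ℝ) + 1 - (h : ℝ)) *
              (∑ n ∈ Finset.range (N - h), a n * (starRingEnd ℂ) (a (n + h))).re := by
  classical
  set S : ℂ := ∑ n ∈ Finset.range N, a n with hS
  set b : ℤ → ℂ := fun m => if 0 ≤ m ∧ m < (N:ℤ) then a m.toNat else 0 with hb
  have hb0 : ∀ m : ℤ, ¬(0 ≤ m ∧ m < (N:ℤ)) → b m = 0 := fun m hm => if_neg hm
  have hbn : ∀ n : ℕ, n < N → b (n:ℤ) = a n := by
    intro n hn
    simp only [hb]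
    rw [if_pos (by constructor <;> omega)]
    simp
  set T : Finset ℤ := Finset.Ico (-(H:ℤ)) (N:ℤ) with hT
  set c : ℤ → ℂ := fun n => ∑ h ∈ Finset.range (H+1), b (n + (h:ℤ)) with hc
  set F : ℕ → ℂ := fun d => ∑ n ∈ Finset.range (N - d), a n * (starRingEnd ℂ) (a (n + d))
    with hF
  set W : ℕ → ℕ → ℂ :=
    fun h h' => ∑ n ∈ T, b (n + (h:ℤ)) * (starRingEnd ℂ) (b (n + (h':ℤ))) with hW
  -- Step A : sum of c over T
  have hA : ∑ n ∈ T, c n = ((H:ℂ)+1) * S := by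
    simp only [hc]
    rw [Finset.sum_comm]
    have hrow : ∀ h ∈ Finset.range (H+1), ∑ n ∈ T, b (n + (h:ℤ)) = S := by
      intro h hh
      rw [Finset.mem_range] at hh
      rw [hT, vdc_shift b _ _ (h:ℤ)]
      rw [vdc_shrink b _ N
        (by intro x hx; simp only [Finset.mem_Ico] at hx ⊢; omega)
        (fun m _ hm => hb0 m hm)]
      exact vdc_int_sum N b a hbn
    rw [Finset.sum_congr rfl hrow, Finset.sum_const, Finset.card_range, nsmul_eq_mul]
    push_cast
    ring
  -- W shift identity
  have hW_shift : ∀ h h' : ℕ, h' ≤ H → h ≤ h' → W h h' = F (h' - h) := by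
    intro h h' hh' hle
    set d : ℕ := h' - h with hd
    have hdN : d < N := by omega
    simp only [hW]
    have e1 : ∀ n : ℤ, b (n + (h':ℤ)) = b ((n + (h:ℤ)) + (d:ℤ)) := by
      intro n; congr 1; omega
    simp_rw [e1]
    rw [hT, vdc_shift (fun m => b m * (starRingEnd ℂ) (b (m + (d:ℤ)))) _ _ (h:ℤ)]
    rw [vdc_shrink (fun m => b m * (starRingEnd ℂ) (b (m + (d:ℤ)))) _ N
      (by intro x hx; simp only [Finset.mem_Ico] at hx ⊢; omega)
      (fun m _ hm => by
        show b m * (starRingEnd ℂ) (b (m + (d:ℤ))) = 0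
        rw [hb0 m hm, zero_mul])]
    rw [vdc_shrink (fun m => b m * (starRingEnd ℂ) (b (m + (d:ℤ)))) _ (N - d)
      (by intro x hx; simp only [Finset.mem_Ico] at hx ⊢; omega)
      (fun m hm hmc => by
        have hz : ¬(0 ≤ m + (d:ℤ) ∧ m + (d:ℤ) < (N:ℤ)) := by
          simp only [Finset.mem_Ico] at hm
          omega
        show b m * (starRingEnd ℂ) (b (m + (d:ℤ))) = 0
        rw [hb0 _ hz, map_zero, mul_zero])]
    simp only [hF]
    refine vdc_int_sum (N - d) _ _ ?_
    intro n hn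
    have h1 : b (n:ℤ) = a n := hbn n (by omega)
    have h2 : b ((n:ℤ) + (d:ℤ)) = a (n + d) := by
      rw [show (n:ℤ) + (d:ℤ) = ((n + d : ℕ) : ℤ) by push_cast; ring]
      exact hbn (n+d) (by omega)
    rw [h1, h2]
  -- conjugation symmetry
  have hW_conj : ∀ h h', W h h' = (starRingEnd ℂ) (W h' h) := by
    intro h h'
    simp only [hW, map_sum]
    refine Finset.sum_congr rfl fun n _ => ?_
    rw [map_mul, Complex.conj_conj]
    ring
  have hre : ∀ h ∈ Finset.range (H+1), ∀ h' ∈ Finset.range (H+1),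
      (W h h').re = (F ((h'-h)+(h-h'))).re := by
    intro h hh h' hh'
    rw [Finset.mem_range] at hh hh'
    rcases le_total h h' with hle | hle
    · rw [hW_shift h h' (by omega) hle, show (h'-h)+(h-h') = h'-h from by omega]
    · rw [hW_conj h h', hW_shift h' h (by omega) hle,
        show (h'-h)+(h-h') = h-h' from by omega]
      exact Complex.conj_re _
  -- expansion of the square sum
  have hC : ∑ n ∈ T, ‖c n‖^2
      = ∑ h ∈ Finset.range (H+1), ∑ h' ∈ Finset.range (H+1), (W h h').re := by
    have e1 : ∀ n : ℤ, ‖c n‖^2 = (c n * (starRingEnd ℂ) (c n)).re := by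
      intro n
      rw [Complex.mul_conj, Complex.ofReal_re, Complex.sq_norm]
    calc ∑ n ∈ T, ‖c n‖^2
        = ∑ n ∈ T, (∑ h ∈ Finset.range (H+1), ∑ h' ∈ Finset.range (H+1),
            b (n + (h:ℤ)) * (starRingEnd ℂ) (b (n + (h':ℤ)))).re := by
          refine Finset.sum_congr rfl fun n _ => ?_
          rw [e1 n]
          congr 1
          simp only [hc]
          rw [map_sum, Finset.sum_mul_sum]
      _ = (∑ n ∈ T, ∑ h ∈ Finset.range (H+1), ∑ h' ∈ Finset.range (H+1),
            b (n + (h:ℤ)) * (starRingEnd ℂ) (b (n + (h':ℤ)))).re := by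
          rw [Complex.re_sum]
      _ = (∑ h ∈ Finset.range (H+1), ∑ h' ∈ Finset.range (H+1), W h h').re := by
          congr 1
          rw [Finset.sum_comm]
          exact Finset.sum_congr rfl fun h _ => Finset.sum_comm
      _ = ∑ h ∈ Finset.range (H+1), ∑ h' ∈ Finset.range (H+1), (W h h').re := by
          rw [Complex.re_sum]
          exact Finset.sum_congr rfl fun h _ => Complex.re_sum _ _
  have hφ0 : (F 0).re = ∑ n ∈ Finset.range N, ‖a n‖^2 := by
    simp only [hF, Nat.sub_zero, add_zero]
    rw [Complex.re_sum]
    refine Finset.sum_congr rfl fun n _ => ?_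
    rw [Complex.mul_conj, Complex.ofReal_re, Complex.sq_norm]
  have hC2 : ∑ n ∈ T, ‖c n‖^2
      = ((H:ℝ)+1) * (∑ n ∈ Finset.range N, ‖a n‖^2)
        + 2 * ∑ d ∈ Finset.Icc 1 H, ((H:ℝ)+1-(d:ℝ)) * (F d).re := by
    rw [hC, Finset.sum_congr rfl (fun h hh => Finset.sum_congr rfl (fun h' hh' => hre h hh h' hh')),
      vdc_pair_count H (fun d => (F d).re), hφ0]
  -- cardinality of T
  have hcard : T.card = N + H := by
    rw [hT, Int.card_Ico]
    omega
  -- Cauchy-Schwarz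
  have hB : ‖∑ n ∈ T, c n‖^2 ≤ ((N:ℝ)+(H:ℝ)) * ∑ n ∈ T, ‖c n‖^2 := by
    have h1 : ‖∑ n ∈ T, c n‖ ≤ ∑ n ∈ T, ‖c n‖ := by
      have := norm_sum_le T c
      simpa using this
    have h2 := sq_sum_le_card_mul_sum_sq (s := T) (f := fun n => ‖c n‖)
    calc ‖∑ n ∈ T, c n‖^2
        ≤ (∑ n ∈ T, ‖c n‖)^2 := by
          apply pow_le_pow_left₀ (norm_nonneg _) h1
      _ ≤ (T.card : ℝ) * ∑ n ∈ T, ‖c n‖^2 := h2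
      _ = ((N:ℝ)+(H:ℝ)) * ∑ n ∈ T, ‖c n‖^2 := by rw [hcard]; push_cast; ring
  have habsA : ‖∑ n ∈ T, c n‖ = ((H:ℝ)+1) * ‖S‖ := by
    rw [hA, norm_mul]
    congr 1
    rw [show ((H:ℂ)+1) = ((H+1 : ℕ) : ℂ) by push_cast; ring, Complex.norm_natCast]
    push_cast
    ring
  -- the key inequality
  have key : (((H:ℝ)+1) * ‖S‖)^2
      ≤ ((N:ℝ)+(H:ℝ)) * (((H:ℝ)+1) * (∑ n ∈ Finset.range N, ‖a n‖^2)
        + 2 * ∑ d ∈ Finset.Icc 1 H, ((H:ℝ)+1-(d:ℝ)) * (F d).re) := by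
    rw [← habsA, ← hC2]
    exact hB
  -- final algebra
  have hN0 : (0:ℝ) < (N:ℝ) := by exact_mod_cast hN
  have hH0 : (0:ℝ) < (H:ℝ)+1 := by positivity
  have hLHS : ‖(N : ℂ)⁻¹ * S‖ ^ 2 = ((N:ℝ)⁻¹ * ‖S‖)^2 := by
    rw [norm_mul, norm_inv, Complex.norm_natCast]
  rw [hLHS]
  have hgoalB : ∑ h ∈ Finset.Icc 1 H, ((H : ℝ) + 1 - (h : ℝ)) *
      (∑ n ∈ Finset.range (N - h), a n * (starRingEnd ℂ) (a (n + h))).re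
      = ∑ d ∈ Finset.Icc 1 H, ((H:ℝ)+1-(d:ℝ)) * (F d).re := by
    simp only [hF]
  rw [hgoalB]
  set A : ℝ := ∑ n ∈ Finset.range N, ‖a n‖^2 with hA'
  set B : ℝ := ∑ d ∈ Finset.Icc 1 H, ((H:ℝ)+1-(d:ℝ)) * (F d).re with hB'
  have hrhs : ((N:ℝ) + H) / ((N:ℝ)^2 * ((H:ℝ)+1)) * A
      + 2 * ((N:ℝ) + H) / ((N:ℝ)^2 * ((H:ℝ)+1)^2) * B
      = ((N:ℝ)+(H:ℝ)) * (((H:ℝ)+1) * A + 2 * B) / ((N:ℝ)^2 * ((H:ℝ)+1)^2) := by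
    field_simp
  rw [hrhs, le_div_iff₀ (by positivity)]
  calc ((N:ℝ)⁻¹ * ‖S‖)^2 * ((N:ℝ)^2 * ((H:ℝ)+1)^2)
      = (((H:ℝ)+1) * ‖S‖)^2 := by
        field_simp
    _ ≤ ((N:ℝ)+(H:ℝ)) * (((H:ℝ)+1) * A + 2 * B) := key
end
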